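/- Squared denominator in a product of reduced fractions (computational content of Lemma 4.5 and Lemma 4.6): Let B ⊆ ℕ^N∖{0} be a finite set of pairwise non-proportional vectors, each having gcd of its coordinates equal to 1 (as is the case for the positive roots of a reduced root system written in simple-root coordinates). Let T₁, T₂ ⊆ B with T₁ ∩ T₂ ≠ ∅, and let f, g be nonzero polynomials in ℤ[x₁,…,x_N] with b_d ∤ f for all d ∈ T₁ and b_d ∤ g for all d ∈ T₂. Then there exist no subset T ⊆ B and polynomial h ∈ ℤ[x₁,…,x_N] with f·g·∏_{d∈T} b_d = h·∏_{d∈T₁} b_d · ∏_{d∈T₂} b_d. (Hence the product of two reduced fractions whose denominator-root sets meet cannot be rewritten with a squarefree denominator ∏_{β∈T}(1−e^{−β}), which is why ch(V(μ))·ch(V(λ)) is not the character of a module in category O when T_{V(μ)} ∩ T_{V(λ)} ≠ ∅.) -/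

import Mathlib

open MvPolynomial

/-- The binomial `b_d = 1 - X^d` in `ℤ[x₁,…,x_N]`. -/
noncomputable def bd {N : ℕ} (d : Fin N → ℕ) : MvPolynomial (Fin N) ℤ :=
  1 - ∏ i, X i ^ d i



lemma bezout {ι : Type*} [DecidableEq ι] (s : Finset ι) (d : ι → ℕ) :
    ∃ c : ι → ℤ, ∑ i ∈ s, c i * (d i : ℤ) = ((s.gcd d : ℕ) : ℤ) := by
  induction s using Finset.induction with
  | empty => exact ⟨0, by simp⟩
  | @insert a s ha ih =>
    obtain ⟨c, hc⟩ := ih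
    refine ⟨fun i => if i = a then Nat.gcdA (d a) (s.gcd d) else Nat.gcdB (d a) (s.gcd d) * c i, ?_⟩
    rw [Finset.sum_insert ha, Finset.gcd_insert]
    have h1 : ∑ i ∈ s, (if i = a then Nat.gcdA (d a) (s.gcd d) else Nat.gcdB (d a) (s.gcd d) * c i) * (d i : ℤ)
        = Nat.gcdB (d a) (s.gcd d) * ∑ i ∈ s, c i * (d i : ℤ) := by
      rw [Finset.mul_sum]
      refine Finset.sum_congr rfl fun i hi => ?_
      rw [if_neg (by rintro rfl; exact ha hi), mul_assoc]
    rw [h1, hc]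
    simp only [if_pos rfl]
    have h2 := Nat.gcd_eq_gcd_ab (d a) (s.gcd d)
    show Nat.gcdA (d a) (s.gcd d) * (d a : ℤ) + _ = ((Nat.gcd (d a) (s.gcd d) : ℕ) : ℤ)
    rw [h2]; ring

namespace SqDenom

variable {N : ℕ}

/-- the linear functional `a ↦ ∑ cᵢ aᵢ`. -/
noncomputable def phiL (c : Fin N → ℤ) : (Fin N → ℤ) →ₗ[ℤ] ℤ :=
  ∑ i, c i • (LinearMap.proj i : (Fin N → ℤ) →ₗ[ℤ] ℤ)

lemma phiL_apply (c a : Fin N → ℤ) : phiL c a = ∑ i, c i * a i := by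
  simp [phiL, LinearMap.sum_apply]

/-- projection along `dz`. -/
noncomputable def piL (c dz : Fin N → ℤ) : (Fin N → ℤ) →ₗ[ℤ] (Fin N → ℤ) :=
  LinearMap.id - (phiL c).smulRight dz

lemma piL_apply (c dz a : Fin N → ℤ) : piL c dz a = a - (phiL c a) • dz := rfl

noncomputable def sigma (c dz : Fin N → ℤ) :
    MvPolynomial (Fin N) ℤ →+* AddMonoidAlgebra ℤ (Fin N → ℤ) :=
  MvPolynomial.eval₂Hom (AddMonoidAlgebra.singleZeroRingHom)
    (fun i => AddMonoidAlgebra.single (piL c dz (Pi.single i 1)) 1)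

/-- cast of exponents -/
def castF (a : Fin N →₀ ℕ) : Fin N → ℤ := fun i => (a i : ℤ)

lemma sigma_monomial (c dz : Fin N → ℤ) (a : Fin N →₀ ℕ) (r : ℤ) :
    sigma c dz (monomial a r) = AddMonoidAlgebra.single (piL c dz (castF a)) r := by
  rw [sigma, eval₂Hom_monomial]
  have h1 : (a.prod fun i e => (AddMonoidAlgebra.single (piL c dz (Pi.single i 1)) 1 : AddMonoidAlgebra ℤ (Fin N → ℤ)) ^ e)
      = ∏ i, (AddMonoidAlgebra.single (piL c dz (Pi.single i 1)) (1:ℤ)) ^ (a i) :=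
    Finsupp.prod_fintype _ _ (fun i => pow_zero _)
  rw [h1]
  have h2 : ∀ i : Fin N, (AddMonoidAlgebra.single (piL c dz (Pi.single i 1)) (1:ℤ)) ^ (a i)
      = AddMonoidAlgebra.single ((a i) • piL c dz (Pi.single i 1)) 1 := by
    intro i; rw [AddMonoidAlgebra.single_pow, one_pow]
  simp only [h2]
  rw [AddMonoidAlgebra.prod_single]
  have h3 : ∑ i, (a i) • piL c dz (Pi.single i 1) = piL c dz (castF a) := by
    have h4 : ∑ i, (a i) • piL c dz (Pi.single i 1)
        = piL c dz (∑ i, (a i) • (Pi.single i 1 : Fin N → ℤ)) := by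
      rw [map_sum]
      exact Finset.sum_congr rfl fun i _ => (map_nsmul (piL c dz) _ _).symm
    rw [h4]
    congr 1
    funext j
    simp [Finset.sum_apply, Pi.single_apply, castF]
  rw [h3, Finset.prod_const_one]
  show AddMonoidAlgebra.single 0 r * _ = _
  rw [AddMonoidAlgebra.single_mul_single, zero_add, mul_one]

lemma prod_univ_X_pow (d : Fin N → ℕ) :
    (∏ i, X i ^ d i : MvPolynomial (Fin N) ℤ)
      = monomial (Finsupp.equivFunOnFinite.symm d) 1 := by
  rw [← MvPolynomial.prod_X_pow_eq_monomial]
  refine (Finset.prod_subset (Finset.subset_univ _) ?_).symm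
  intro i _ h
  have hz : d i = 0 := Finsupp.notMem_support_iff.mp h
  rw [hz, pow_zero]

lemma castF_symm (d : Fin N → ℕ) :
    castF (Finsupp.equivFunOnFinite.symm d) = fun i => (d i : ℤ) := rfl

lemma sigma_bd (d : Fin N → ℕ) (c : Fin N → ℤ)
    (hc : ∑ i, c i * (d i : ℤ) = 1) :
    sigma c (fun i => (d i : ℤ)) (bd d) = 0 := by
  set dz : Fin N → ℤ := fun i => (d i : ℤ) with hdz
  have hphi : phiL c dz = 1 → True := fun _ => trivial
  rw [bd, prod_univ_X_pow, map_sub, map_one, sigma_monomial, castF_symm]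
  have h1 : piL c dz dz = 0 := by
    rw [piL_apply, phiL_apply, hc, one_smul, sub_self]
  rw [← hdz, h1, ← AddMonoidAlgebra.one_def, sub_self]

lemma bd_dvd_of_sigma_aux (d : Fin N → ℕ) (c : Fin N → ℤ)
    {a a' : Fin N →₀ ℕ}
    (heq : castF a - castF a' = (phiL c (castF a - castF a')) • (fun i => (d i : ℤ)))
    (hk : 0 ≤ phiL c (castF a - castF a')) :
    bd d ∣ (monomial a 1 - monomial a' 1 : MvPolynomial (Fin N) ℤ) := by
  set k : ℤ := phiL c (castF a - castF a') with hkdef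
  set m : ℕ := k.toNat with hm
  have hai : ∀ i, a i = a' i + m * d i := by
    intro i
    have h1 : (a i : ℤ) - (a' i : ℤ) = k * d i := by
      have := congrFun heq i
      simpa [castF, Pi.smul_apply, smul_eq_mul] using this
    have h2 : (a i : ℤ) = (a' i : ℤ) + (m : ℤ) * d i := by
      rw [hm, Int.toNat_of_nonneg hk]; omega
    exact_mod_cast h2
  have hfinsupp : a = a' + m • (Finsupp.equivFunOnFinite.symm d) := by
    ext i
    simp [hai i, Finsupp.smul_apply]
  have hmon : (monomial a 1 : MvPolynomial (Fin N) ℤ)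
      = monomial a' 1 * (monomial (Finsupp.equivFunOnFinite.symm d) 1) ^ m := by
    rw [monomial_pow, monomial_mul, one_pow, mul_one, hfinsupp]
  have hdvd : bd d ∣ 1 - (monomial (Finsupp.equivFunOnFinite.symm d) 1 : MvPolynomial (Fin N) ℤ) ^ m := by
    rw [bd, prod_univ_X_pow]
    simpa using sub_dvd_pow_sub_pow (1 : MvPolynomial (Fin N) ℤ) (monomial (Finsupp.equivFunOnFinite.symm d) 1) m
  have hrw : (monomial a 1 - monomial a' 1 : MvPolynomial (Fin N) ℤ)
      = -(monomial a' 1 * (1 - (monomial (Finsupp.equivFunOnFinite.symm d) 1) ^ m)) := by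
    rw [hmon]; ring
  rw [hrw, dvd_neg]
  exact hdvd.mul_left _

lemma bd_dvd_monomial_sub (d : Fin N → ℕ) (c : Fin N → ℤ)
    {a a' : Fin N →₀ ℕ}
    (h : piL c (fun i => (d i : ℤ)) (castF a) = piL c (fun i => (d i : ℤ)) (castF a')) :
    bd d ∣ (monomial a 1 - monomial a' 1 : MvPolynomial (Fin N) ℤ) := by
  set dz : Fin N → ℤ := fun i => (d i : ℤ)
  have h0 : piL c dz (castF a - castF a') = 0 := by
    rw [map_sub, h, sub_self]
  have heq : castF a - castF a' = (phiL c (castF a - castF a')) • dz := by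
    have := h0
    rw [piL_apply] at this
    linear_combination (norm := module) this
  rcases le_or_gt 0 (phiL c (castF a - castF a')) with hk | hk
  · exact bd_dvd_of_sigma_aux d c heq hk
  · have heq' : castF a' - castF a = (phiL c (castF a' - castF a)) • dz := by
      have h5 : castF a' - castF a = -(castF a - castF a') := by ring
      rw [h5, map_neg, neg_smul, ← heq]
    have hk' : 0 ≤ phiL c (castF a' - castF a) := by
      have h5 : castF a' - castF a = -(castF a - castF a') := by ring
      rw [h5, map_neg]; omega
    have := bd_dvd_of_sigma_aux d c heq' hk'
    rw [← dvd_neg] at this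
    simpa using this

lemma sigma_eq_sum (d : Fin N → ℕ) (c : Fin N → ℤ) (f : MvPolynomial (Fin N) ℤ) :
    sigma c (fun i => (d i : ℤ)) f
      = ∑ m ∈ f.support, AddMonoidAlgebra.single (piL c (fun i => (d i : ℤ)) (castF m)) (coeff m f) := by
  conv_lhs => rw [← MvPolynomial.support_sum_monomial_coeff f]
  rw [map_sum]
  exact Finset.sum_congr rfl fun m _ => sigma_monomial _ _ m _

lemma sum_single_apply (S : Finset (Fin N →₀ ℕ)) (g : (Fin N →₀ ℕ) → (Fin N → ℤ))
    (v : (Fin N →₀ ℕ) → ℤ) (p : Fin N → ℤ) :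
    (∑ m ∈ S, AddMonoidAlgebra.single (g m) (v m) : AddMonoidAlgebra ℤ (Fin N → ℤ)).coeff p
      = ∑ m ∈ S, if g m = p then v m else 0 := by
  classical
  induction S using Finset.cons_induction with
  | empty => simp
  | cons x S hx ih =>
    rw [Finset.sum_cons, Finset.sum_cons, ← ih]
    rw [AddMonoidAlgebra.coeff_add, Finsupp.add_apply, AddMonoidAlgebra.coeff_single, Finsupp.single_apply]

lemma bd_dvd_of_sigma_zero (d : Fin N → ℕ) (c : Fin N → ℤ) :
    ∀ (n : ℕ) (f : MvPolynomial (Fin N) ℤ), f.support.card ≤ n →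
      sigma c (fun i => (d i : ℤ)) f = 0 → bd d ∣ f := by
  intro n
  induction n with
  | zero =>
    intro f hcard _
    have hf : f = 0 := by
      rw [← MvPolynomial.support_eq_empty]
      exact Finset.card_eq_zero.mp (Nat.le_zero.mp hcard)
    rw [hf]
    exact dvd_zero _
  | succ n ih =>
    intro f hcard hσ
    by_cases hf0 : f = 0
    · rw [hf0]; exact dvd_zero _
    set dz : Fin N → ℤ := fun i => (d i : ℤ) with hdz
    obtain ⟨a, ha⟩ : f.support.Nonempty := by
      rw [Finset.nonempty_iff_ne_empty, ne_eq, MvPolynomial.support_eq_empty]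
      exact hf0
    -- there must be another exponent in the same fibre of piL ∘ castF
    classical
    have happ : (0:ℤ) = ∑ m ∈ f.support,
        (if piL c dz (castF m) = piL c dz (castF a) then coeff m f else 0) := by
      have h1 := congrArg (fun z : AddMonoidAlgebra ℤ (Fin N → ℤ) => z.coeff (piL c dz (castF a)))
        (hσ.symm.trans (sigma_eq_sum d c f))
      simpa [sum_single_apply, Finsupp.single_apply] using h1
    have hex : ∃ a' ∈ f.support, a' ≠ a ∧ piL c dz (castF a') = piL c dz (castF a) := by
      by_contra hno
      push_neg at hno
      have h2 : ∑ m ∈ f.support,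
          (if piL c dz (castF m) = piL c dz (castF a) then coeff m f else 0)
            = (if piL c dz (castF a) = piL c dz (castF a) then coeff a f else 0) :=
        Finset.sum_eq_single_of_mem a ha fun m hm hne => if_neg (hno m hm hne)
      rw [h2] at happ
      simp only [if_pos rfl] at happ
      exact MvPolynomial.mem_support_iff.mp ha happ.symm
    obtain ⟨a', ha', hne, hpi⟩ := hex
    set c0 : ℤ := coeff a f with hc0
    set f' : MvPolynomial (Fin N) ℤ := f - C c0 * (monomial a 1 - monomial a' 1) with hf'
    have hdvd1 : bd d ∣ (monomial a 1 - monomial a' 1 : MvPolynomial (Fin N) ℤ) :=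
      bd_dvd_monomial_sub d c hpi.symm
    have hσ' : sigma c dz f' = 0 := by
      rw [hf', map_sub, map_mul, hσ, map_sub, sigma_monomial, sigma_monomial, hpi, sub_self,
        mul_zero, sub_zero]
    have hsupp : f'.support ⊆ f.support.erase a := by
      intro m hm
      rw [Finset.mem_erase]
      have hcf : coeff m f' = coeff m f - c0 * ((if a = m then (1:ℤ) else 0) - if a' = m then 1 else 0) := by
        rw [hf', coeff_sub, coeff_C_mul, coeff_sub, coeff_monomial, coeff_monomial]
      have hm' := MvPolynomial.mem_support_iff.mp hm
      constructor
      · rintro rfl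
        rw [hcf, if_pos rfl, if_neg hne] at hm'
        simp [hc0] at hm'
      · by_contra hmf
        have hz : coeff m f = 0 := MvPolynomial.notMem_support_iff.mp hmf
        have hma : a ≠ m := by rintro rfl; exact hmf ha
        have hma' : a' ≠ m := by rintro rfl; exact hmf ha'
        rw [hcf, hz, if_neg hma, if_neg hma'] at hm'
        simp at hm'
    have hcard' : f'.support.card ≤ n := by
      have h3 := Finset.card_le_card hsupp
      have h4 := Finset.card_erase_of_mem ha
      omega
    have hdvd' := ih f' hcard' hσ'
    have hfeq : f = f' + C c0 * (monomial a 1 - monomial a' 1) := by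
      rw [hf']; ring
    rw [hfeq]
    exact dvd_add hdvd' (hdvd1.mul_left _)

lemma bd_dvd_iff (d : Fin N → ℕ) (c : Fin N → ℤ) (hc : ∑ i, c i * (d i : ℤ) = 1)
    (f : MvPolynomial (Fin N) ℤ) :
    bd d ∣ f ↔ sigma c (fun i => (d i : ℤ)) f = 0 := by
  constructor
  · rintro ⟨q, rfl⟩
    rw [map_mul, sigma_bd d c hc, zero_mul]
  · exact bd_dvd_of_sigma_zero d c f.support.card f le_rfl

lemma bd_ne_zero (d : Fin N → ℕ) (hd0 : d ≠ 0) : bd d ≠ 0 := by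
  intro h
  have h1 : coeff 0 (bd d) = 1 := by
    rw [bd, prod_univ_X_pow, coeff_sub, coeff_one, coeff_monomial]
    have h2 : Finsupp.equivFunOnFinite.symm d ≠ 0 := by
      intro h2
      apply hd0
      have h3 := congrArg (⇑Finsupp.equivFunOnFinite) h2
      simpa using h3.trans (funext fun _ => rfl : Finsupp.equivFunOnFinite (0 : Fin N →₀ ℕ) = 0)
    rw [if_pos rfl, if_neg h2, sub_zero]
  rw [h, coeff_zero] at h1
  exact one_ne_zero h1.symm

lemma bd_prime (d : Fin N → ℕ) (hd0 : d ≠ 0) (c : Fin N → ℤ)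
    (hc : ∑ i, c i * (d i : ℤ) = 1) : Prime (bd d) := by
  refine ⟨bd_ne_zero d hd0, ?_, ?_⟩
  · intro hu
    have h1 : bd d ∣ 1 := hu.dvd
    rw [bd_dvd_iff d c hc, map_one] at h1
    exact (one_ne_zero : (1 : AddMonoidAlgebra ℤ (Fin N → ℤ)) ≠ 0) h1
  · intro x y hxy
    rw [bd_dvd_iff d c hc, map_mul] at hxy
    rw [bd_dvd_iff d c hc, bd_dvd_iff d c hc]
    exact mul_eq_zero.mp hxy

lemma eq_of_bd_dvd_bd (d : Fin N → ℕ) (hgcdd : Finset.univ.gcd d = 1)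
    (c : Fin N → ℤ) (hc : ∑ i, c i * (d i : ℤ) = 1)
    (d' : Fin N → ℕ) (hd'0 : d' ≠ 0) (hgcd' : Finset.univ.gcd d' = 1)
    (hdvd : bd d ∣ bd d') : d' = d := by
  set dz : Fin N → ℤ := fun i => (d i : ℤ) with hdz
  set dz' : Fin N → ℤ := fun i => (d' i : ℤ) with hdz'
  have h0 : sigma c dz (bd d') = 0 := (bd_dvd_iff d c hc _).mp hdvd
  rw [bd, prod_univ_X_pow, map_sub, map_one, sigma_monomial, castF_symm] at h0
  have h1 : AddMonoidAlgebra.single (piL c dz dz') (1:ℤ)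
      = AddMonoidAlgebra.single (0 : Fin N → ℤ) 1 := by
    rw [← AddMonoidAlgebra.one_def]
    exact (sub_eq_zero.mp h0).symm
  have h2 : piL c dz dz' = 0 := by
    rcases AddMonoidAlgebra.single_inj.mp h1 with ⟨h3, _⟩ | ⟨h3, _⟩
    · exact h3
    · exact absurd h3 one_ne_zero
  have heq : dz' = (phiL c dz') • dz := by
    have h3 := h2
    rw [piL_apply] at h3
    linear_combination (norm := module) h3
  set k : ℤ := phiL c dz' with hk
  obtain ⟨i₀, hi₀⟩ : ∃ i, d' i ≠ 0 := Function.ne_iff.mp hd'0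
  have hki : (d' i₀ : ℤ) = k * d i₀ := by
    have := congrFun heq i₀
    simpa [smul_eq_mul] using this
  have hkpos : 0 < k := by
    have h4 : (0:ℤ) < (d' i₀ : ℤ) := by exact_mod_cast Nat.pos_of_ne_zero hi₀
    nlinarith [Int.natCast_nonneg (d i₀)]
  set m : ℕ := k.toNat with hm
  have hmk : (m : ℤ) = k := Int.toNat_of_nonneg hkpos.le
  have hdm : ∀ i, d' i = m * d i := by
    intro i
    have h5 : (d' i : ℤ) = (m : ℤ) * d i := by
      rw [hmk]
      have := congrFun heq i
      simpa [smul_eq_mul] using this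
    exact_mod_cast h5
  have hgm : Finset.univ.gcd d' = m * Finset.univ.gcd d := by
    have h6 : d' = fun i => m * d i := funext hdm
    rw [h6, Finset.gcd_mul_left]
    simp
  rw [hgcdd, hgcd', mul_one] at hgm
  funext i
  rw [hdm i, ← hgm, one_mul]

end SqDenom


/-- computational content of Lemmas 4.5 and 4.6: a product of two
reduced fractions whose denominator-root sets meet cannot be rewritten with a
squarefree denominator `∏_{d ∈ T} b_d`. -/
theorem squared_denominator_in_product_of_reduced_fractions
    {N : ℕ} (B : Finset (Fin N → ℕ))
    (h0 : ∀ d ∈ B, d ≠ 0)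
    (hgcd : ∀ d ∈ B, Finset.univ.gcd d = 1)
    (hprop : ∀ d ∈ B, ∀ d' ∈ B, d ≠ d' →
      ∀ q : ℚ, (fun i => (d' i : ℚ)) ≠ fun i => q * (d i : ℚ))
    (T₁ T₂ : Finset (Fin N → ℕ)) (hT₁ : T₁ ⊆ B) (hT₂ : T₂ ⊆ B)
    (hmeet : (T₁ ∩ T₂).Nonempty)
    (f g : MvPolynomial (Fin N) ℤ) (hf : f ≠ 0) (hg : g ≠ 0)
    (hfd : ∀ d ∈ T₁, ¬ bd d ∣ f) (hgd : ∀ d ∈ T₂, ¬ bd d ∣ g) :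
    ¬ ∃ (T : Finset (Fin N → ℕ)) (h : MvPolynomial (Fin N) ℤ),
        T ⊆ B ∧
        f * g * ∏ d ∈ T, bd d = h * (∏ d ∈ T₁, bd d) * ∏ d ∈ T₂, bd d := by
  classical
  rintro ⟨T, h, hTB, heq⟩
  obtain ⟨d₀, hd₀⟩ := hmeet
  rw [Finset.mem_inter] at hd₀
  have hd₀B : d₀ ∈ B := hT₁ hd₀.1
  obtain ⟨c, hc⟩ := bezout Finset.univ d₀
  rw [hgcd d₀ hd₀B, Nat.cast_one] at hc
  have hP : Prime (bd d₀) := SqDenom.bd_prime d₀ (h0 d₀ hd₀B) c hc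
  have hPf : ¬ bd d₀ ∣ f := hfd d₀ hd₀.1
  have hPg : ¬ bd d₀ ∣ g := hgd d₀ hd₀.2
  have hPnot : ∀ e ∈ B, e ≠ d₀ → ¬ bd d₀ ∣ bd e := by
    intro e heB hne hdvd
    exact hne (SqDenom.eq_of_bd_dvd_bd d₀ (hgcd d₀ hd₀B) c hc e (h0 e heB) (hgcd e heB) hdvd)
  have hrhs : bd d₀ * bd d₀ ∣ f * g * ∏ d ∈ T, bd d := by
    rw [heq]
    obtain ⟨q1, hq1⟩ := Finset.dvd_prod_of_mem bd hd₀.1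
    obtain ⟨q2, hq2⟩ := Finset.dvd_prod_of_mem bd hd₀.2
    exact ⟨h * q1 * q2, by rw [hq1, hq2]; ring⟩
  have hQ : ¬ bd d₀ ∣ ∏ e ∈ T.erase d₀, bd e := by
    intro hdvd
    obtain ⟨e, he, hdvd'⟩ := hP.exists_mem_finset_dvd hdvd
    obtain ⟨hne, heT⟩ := Finset.mem_erase.mp he
    exact hPnot e (hTB heT) hne hdvd'
  by_cases hd₀T : d₀ ∈ T
  · rw [← Finset.mul_prod_erase T _ hd₀T] at hrhs
    have h4 : f * g * (bd d₀ * ∏ e ∈ T.erase d₀, bd e)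
        = bd d₀ * (f * g * ∏ e ∈ T.erase d₀, bd e) := by ring
    rw [h4] at hrhs
    have h3 : bd d₀ ∣ f * g * ∏ e ∈ T.erase d₀, bd e :=
      (mul_dvd_mul_iff_left hP.ne_zero).mp hrhs
    rcases (Prime.dvd_mul hP).mp h3 with h5 | h5
    · rcases (Prime.dvd_mul hP).mp h5 with h6 | h6
      · exact hPf h6
      · exact hPg h6
    · exact hQ h5
  · have hQ2 : ¬ bd d₀ ∣ ∏ e ∈ T, bd e := by
      rw [← Finset.erase_eq_of_notMem hd₀T]
      exact hQ
    have h3 : bd d₀ ∣ f * g * ∏ e ∈ T, bd e :=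
      dvd_trans (dvd_mul_right (bd d₀) (bd d₀)) hrhs
    rcases (Prime.dvd_mul hP).mp h3 with h5 | h5
    · rcases (Prime.dvd_mul hP).mp h5 with h6 | h6
      · exact hPf h6
      · exact hPg h6
    · exact hQ2 h5
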